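/- arXiv:2604.09939 — 10 statements merged into one kernel-verified Lean document; each statement's English description precedes it below -/
import Mathlib

section
/- In a normed lattice X, if every increasing norm-Cauchy sequence converges in norm, then X is norm complete (a Banach lattice). -/
open Filter Topology

theorem stmt_0 {X : Type*} [NormedAddCommGroup X] [Lattice X] [HasSolidNorm X]
    [IsOrderedAddMonoid X]
    (h : ∀ u : ℕ → X, Monotone u → CauchySeq u → ∃ x : X, Tendsto u atTop (𝓝 x)) :
    CompleteSpace X := by
  refine Metric.complete_of_convergent_controlled_sequences (fun n => (1/2) ^ n)
    (fun n => by positivity) (fun u hu => ?_)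
  set d : ℕ → X := fun n => u (n + 1) - u n with hd
  have hdn : ∀ n, ‖d n‖ ≤ (1/2) ^ n := fun n => by
    have := hu n (n+1) n (Nat.le_succ n) (le_refl n)
    rw [dist_eq_norm] at this
    simpa [hd, norm_sub_rev] using this.le
  have habs : ∀ a : X, |a⁺| ≤ |a| := fun a => by
    rw [abs_of_nonneg (posPart_nonneg a)]
    exact sup_le (le_abs_self a) (abs_nonneg a)
  have key : ∀ e : ℕ → X, (∀ k, e k = (d k)⁺ ∨ e k = (d k)⁻) →
      ∃ x : X, Tendsto (fun n => ∑ k ∈ Finset.range n, e k) atTop (𝓝 x) := by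
    intro e he
    have hnonneg : ∀ k, 0 ≤ e k := fun k => by
      rcases he k with h' | h' <;> rw [h']
      exacts [posPart_nonneg _, negPart_nonneg _]
    have hbound : ∀ k, ‖e k‖ ≤ (1/2) ^ k := fun k => by
      refine le_trans (le_trans (norm_le_norm_of_abs_le_abs ?_) le_rfl) (hdn k)
      rcases he k with h' | h' <;> rw [h']
      · exact habs _
      · rw [abs_of_nonneg (negPart_nonneg _)]
        exact sup_le (neg_le_abs _) (abs_nonneg _)
    refine h _ (fun m n hmn => ?_) ?_
    · exact Finset.sum_le_sum_of_subset_of_nonneg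
        (Finset.range_subset_range.2 hmn) (fun k _ _ => hnonneg k)
    · refine cauchySeq_of_le_geometric (1/2) 1 (by norm_num) (fun n => ?_)
      rw [dist_eq_norm, Finset.sum_range_succ]
      simpa [norm_sub_rev, one_div] using hbound n
  obtain ⟨x, hx⟩ := key (fun k => (d k)⁺) (fun k => Or.inl rfl)
  obtain ⟨y, hy⟩ := key (fun k => (d k)⁻) (fun k => Or.inr rfl)
  refine ⟨u 0 + x - y, ?_⟩
  have huv : ∀ n, u n = u 0 + (∑ k ∈ Finset.range n, (d k)⁺)
      - (∑ k ∈ Finset.range n, (d k)⁻) := fun n => by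
    have hsum : ∑ k ∈ Finset.range n, (d k)⁺ - ∑ k ∈ Finset.range n, (d k)⁻
        = u n - u 0 := by
      rw [← Finset.sum_sub_distrib]
      simp_rw [posPart_sub_negPart]
      exact Finset.sum_range_sub u n
    rw [add_sub_assoc, hsum]
    abel
  have := (((tendsto_const_nhds (x := u 0) (f := (atTop : Filter ℕ))).add hx).sub hy)
  exact this.congr (fun n => (huv n).symm)
end

section
/- In a normed lattice X, if every norm-summable sequence in X is order bounded, then every increasing norm-Cauchy sequence in X is order bounded. -/
private lemma aux_cancel {X : Type*} [Lattice X] [AddCommGroup X]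
    [CovariantClass X X (· + ·) (· ≤ ·)] (k : ℕ) (a : X) (h : 0 ≤ 2 ^ k • a) : 0 ≤ a := by
  induction k with
  | zero => simpa using h
  | succ n ih =>
      apply ih
      apply nsmul_two_semiclosed
      rwa [smul_smul, ← pow_succ']

private lemma aux_sum (K : ℕ) : ∑ k ∈ Finset.range K, 2 ^ (K - k) ≤ 2 ^ (K + 1) := by
  induction K with
  | zero => simp
  | succ K ih =>
      rw [Finset.sum_range_succ']
      simp only [Nat.succ_sub_succ, Nat.sub_zero]
      calc (∑ k ∈ Finset.range K, 2 ^ (K - k)) + 2 ^ (K + 1)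
          ≤ 2 ^ (K + 1) + 2 ^ (K + 1) := add_le_add_left ih _
        _ = 2 ^ (K + 1 + 1) := by rw [pow_succ 2 (K + 1)]; omega

theorem stmt_4 {X : Type*} [NormedAddCommGroup X] [Lattice X] [HasSolidNorm X]
    [IsOrderedAddMonoid X]
    (h : ∀ x : ℕ → X, Summable (fun n => ‖x n‖) → ∃ a b : X, ∀ n, x n ∈ Set.Icc a b) :
    ∀ y : ℕ → X, Monotone y → CauchySeq y → ∃ a b : X, ∀ n, y n ∈ Set.Icc a b := by
  intro y hmono hcauchy
  have hC := Metric.cauchySeq_iff.mp hcauchy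
  choose N hN using fun k : ℕ => hC ((1/4 : ℝ) ^ k) (by positivity)
  set n : ℕ → ℕ := fun k => Nat.rec (N 0) (fun k nk => max (nk + 1) (N (k + 1))) k with hn
  have hn0 : n 0 = N 0 := rfl
  have hnsucc : ∀ k, n (k + 1) = max (n k + 1) (N (k + 1)) := fun k => rfl
  have hsm : StrictMono n := strictMono_nat_of_lt_succ fun k => by
    rw [hnsucc]; exact lt_of_lt_of_le (Nat.lt_succ_self _) (le_max_left _ _)
  have hnN : ∀ k, N k ≤ n k := by
    intro k
    cases k with
    | zero => exact hn0.ge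
    | succ m => rw [hnsucc]; exact le_max_right _ _
  set d : ℕ → X := fun k => y (n (k + 1)) - y (n k) with hd
  have hdnorm : ∀ k, ‖d k‖ ≤ (1/4 : ℝ) ^ k := by
    intro k
    have := hN k (n (k + 1)) (le_trans (hnN k) (hsm (Nat.lt_succ_self k)).le) (n k) (hnN k)
    rw [dist_eq_norm] at this
    exact this.le
  have hdpos : ∀ k, 0 ≤ d k := fun k => sub_nonneg.mpr (hmono (hsm (Nat.lt_succ_self k)).le)
  set x : ℕ → X := fun k => 2 ^ k • d k with hx
  have hxnorm : ∀ k, ‖x k‖ ≤ (1/2 : ℝ) ^ k := by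
    intro k
    calc ‖x k‖ ≤ (2 ^ k : ℕ) * ‖d k‖ := norm_nsmul_le
      _ ≤ (2 ^ k : ℝ) * (1/4 : ℝ) ^ k := by
          push_cast
          exact mul_le_mul_of_nonneg_left (hdnorm k) (by positivity)
      _ = (1/2 : ℝ) ^ k := by rw [← mul_pow]; norm_num
  have hsum : Summable (fun k => ‖x k‖) :=
    Summable.of_nonneg_of_le (fun k => norm_nonneg _) hxnorm
      (summable_geometric_of_lt_one (by norm_num) (by norm_num))
  obtain ⟨a, b, hab⟩ := h x hsum
  set c : X := b ⊔ 0 with hc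
  have hc0 : (0 : X) ≤ c := le_sup_right
  have hxc : ∀ k, x k ≤ c := fun k => le_trans (hab k).2 le_sup_left
  have key : ∀ K, y (n K) ≤ y (n 0) + 2 • c := by
    intro K
    rw [← sub_le_iff_le_add']
    rw [← sub_nonneg]
    apply aux_cancel K
    rw [smul_sub, sub_nonneg]
    have htel : y (n K) - y (n 0) = ∑ k ∈ Finset.range K, d k := by
      rw [Finset.sum_range_sub (fun i => y (n i))]
    rw [htel, Finset.smul_sum]
    calc ∑ k ∈ Finset.range K, 2 ^ K • d k
        ≤ ∑ k ∈ Finset.range K, 2 ^ (K - k) • c := by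
          apply Finset.sum_le_sum
          intro k hk
          have hkK : k ≤ K := (Finset.mem_range.mp hk).le
          have : 2 ^ K • d k = 2 ^ (K - k) • x k := by
            rw [hx, smul_smul, ← pow_add, Nat.sub_add_cancel hkK]
          rw [this]
          exact nsmul_le_nsmul_right (hxc k) _
      _ = (∑ k ∈ Finset.range K, 2 ^ (K - k)) • c := by rw [Finset.sum_smul]
      _ ≤ (2 ^ (K + 1)) • c := by
          apply nsmul_le_nsmul_left hc0
          exact aux_sum K
      _ = 2 ^ K • 2 • c := by rw [smul_smul, pow_succ, mul_comm]
  refine ⟨y 0, y (n 0) + 2 • c, fun m => ⟨hmono (Nat.zero_le m), ?_⟩⟩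
  exact le_trans (hmono (hsm.le_apply)) (key m)
end

section
/- A normed lattice X is majorizing in its norm completion if and only if every norm-Cauchy sequence in X has an order bounded subsequence. -/
set_option maxHeartbeats 1000000

theorem stmt_6 {X Y : Type*} [NormedAddCommGroup X] [Lattice X] [HasSolidNorm X]
    [IsOrderedAddMonoid X]
    [NormedAddCommGroup Y] [Lattice Y] [HasSolidNorm Y] [IsOrderedAddMonoid Y]
    [CompleteSpace Y]
    (f : X → Y) (hf_iso : Isometry f)
    (hf_add : ∀ a b : X, f (a + b) = f a + f b)
    (hf_sup : ∀ a b : X, f (a ⊔ b) = f a ⊔ f b)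
    (hf_dense : DenseRange f) :
    (∀ z : Y, ∃ x : X, z ≤ f x) ↔
      (∀ x : ℕ → X, CauchySeq x →
        ∃ φ : ℕ → ℕ, StrictMono φ ∧ ∃ a b : X, ∀ n, x (φ n) ∈ Set.Icc a b) := by
  -- basic facts about f
  set F : X →+ Y := AddMonoidHom.mk' f hf_add with hF
  have hFf : ∀ a : X, F a = f a := fun a => rfl
  have hf0 : f 0 = 0 := map_zero F
  have hinj : Function.Injective f := hf_iso.injective
  have hnorm : ∀ a : X, ‖f a‖ = ‖a‖ := by
    intro a
    have := hf_iso.dist_eq a 0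
    simpa [hf0, dist_zero_right] using this
  have hmono : ∀ a b : X, a ≤ b ↔ f a ≤ f b := by
    intro a b
    constructor
    · intro h
      have h1 : f (a ⊔ b) = f b := by rw [sup_eq_right.mpr h]
      rw [hf_sup] at h1
      exact sup_eq_right.mp h1
    · intro h
      have h1 : f (a ⊔ b) = f b := by rw [hf_sup, sup_eq_right.mpr h]
      exact sup_eq_right.mp (hinj h1)
  have habs : ∀ a : X, f |a| = |f a| := by
    intro a
    rw [abs, abs, hf_sup]
    congr 1
    exact map_neg F a
  constructor
  · -- majorizing → order bounded subsequences
    intro hmaj x hx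
    obtain ⟨φ, hφ, hd⟩ := hx.subseq_mem (V := fun n => {p | dist p.1 p.2 < (1/2 : ℝ)^n})
      (fun n => Metric.dist_mem_uniformity (by positivity))
    let g : ℕ → X := fun n => x (φ (n+1)) - x (φ n)
    have hgn : ∀ n, ‖g n‖ ≤ (1/2 : ℝ)^n := by
      intro n
      have := hd n
      simp only [Set.mem_setOf_eq, dist_eq_norm] at this
      exact this.le
    have hsumnorm : Summable fun n => ‖f |g n|‖ := by
      refine Summable.of_nonneg_of_le (fun n => norm_nonneg _) (fun n => ?_)
        summable_geometric_two
    -- nonsense, fill below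
      rw [hnorm, norm_abs_eq_norm]
      exact hgn n
    have hsum : Summable fun n => f |g n| := hsumnorm.of_norm
    obtain ⟨u, hu⟩ := hmaj (∑' n, f |g n|)
    have hSn : ∀ n : ℕ, (∑ k ∈ Finset.range n, |g k|) ≤ u := by
      intro n
      rw [hmono, ← hFf, map_sum]
      refine le_trans ?_ hu
      refine Summable.sum_le_tsum (Finset.range n) (fun k _ => ?_) hsum
      rw [hFf, ← hf0, ← hmono]
      exact abs_nonneg _
    refine ⟨φ, hφ, x (φ 0) - u, x (φ 0) + u, fun n => ?_⟩
    have habs_sum : ∀ m : ℕ,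
        |∑ k ∈ Finset.range m, g k| ≤ ∑ k ∈ Finset.range m, |g k| := by
      intro m
      induction m with
      | zero => simp
      | succ m ih =>
        rw [Finset.sum_range_succ, Finset.sum_range_succ]
        exact le_trans (abs_add_le _ _) (add_le_add ih le_rfl)
    have htel : ∑ k ∈ Finset.range n, g k = x (φ n) - x (φ 0) :=
      Finset.sum_range_sub (fun i => x (φ i)) n
    have habs' : |x (φ n) - x (φ 0)| ≤ u := by
      rw [← htel]
      exact le_trans (habs_sum n) (hSn n)
    have h2 : x (φ n) - x (φ 0) ≤ u := le_trans (le_abs_self _) habs'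
    have h1 : -u ≤ x (φ n) - x (φ 0) :=
      le_trans (neg_le_neg habs') (neg_le.mpr (neg_le_abs _))
    constructor
    · have := add_le_add_left h1 (x (φ 0))
      simpa [sub_eq_add_neg, add_comm, add_left_comm, add_assoc] using this
    · have := add_le_add_left h2 (x (φ 0))
      simpa [sub_eq_add_neg, add_comm, add_left_comm, add_assoc] using this
  · -- order bounded subsequences → majorizing
    intro H z
    have hx : ∀ n : ℕ, ∃ a : X, dist z (f a) < 1/(n+1 : ℝ) :=
      fun n => hf_dense.exists_dist_lt z (by positivity)
    choose x hxd using hx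
    have htend : Filter.Tendsto (fun n => f (x n)) Filter.atTop (nhds z) := by
      rw [tendsto_iff_dist_tendsto_zero]
      refine squeeze_zero (fun n => dist_nonneg) (fun n => ?_)
        tendsto_one_div_add_atTop_nhds_zero_nat
      rw [dist_comm]
      exact (hxd n).le
    have hcx : CauchySeq x := by
      rw [Metric.cauchySeq_iff]
      have := htend.cauchySeq
      rw [Metric.cauchySeq_iff] at this
      intro ε hε
      obtain ⟨N, hN⟩ := this ε hε
      exact ⟨N, fun m hm n hn => by
        have := hN m hm n hn
        calc dist (x m) (x n) = dist (f (x m)) (f (x n)) := (hf_iso.dist_eq _ _).symm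
          _ < ε := this⟩
    obtain ⟨φ, hφ, a, b, hab⟩ := H x hcx
    refine ⟨b, ?_⟩
    have htend' : Filter.Tendsto (fun n => f (x (φ n))) Filter.atTop (nhds z) :=
      htend.comp hφ.tendsto_atTop
    exact le_of_tendsto htend' (Filter.Eventually.of_forall fun n =>
      (hmono _ _).mp (hab n).2)
end

section
/- In a normed lattice X, if every norm-null sequence has an order bounded subsequence, then every norm-null net (x_α) in X contains, as a subset of its range, a sequence that converges relatively uniformly to 0. -/
open Filter Topology

section Aux

variable {X : Type*} [NormedAddCommGroup X] [Lattice X] [HasSolidNorm X] [IsOrderedAddMonoid X] [NormedSpace ℝ X]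

/-- Halving preserves positivity in a lattice group with ℝ-action. -/
private lemma half_smul_nonneg {v : X} (hv : 0 ≤ v) : 0 ≤ ((2 : ℝ)⁻¹) • v := by
  apply nsmul_two_semiclosed
  have : (2 : ℕ) • ((2 : ℝ)⁻¹ • v) = ((2 : ℝ) * (2 : ℝ)⁻¹) • v := by
    rw [← Nat.cast_smul_eq_nsmul ℝ, smul_smul]; norm_num
  rw [this]; norm_num; exact hv

private lemma pow_inv_smul_nonneg (k : ℕ) {v : X} (hv : 0 ≤ v) :
    0 ≤ (((2 : ℝ) ^ k)⁻¹) • v := by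
  induction k with
  | zero => simpa using hv
  | succ k ih =>
      have : (((2 : ℝ) ^ (k + 1))⁻¹) • v = ((2 : ℝ)⁻¹) • ((((2 : ℝ) ^ k)⁻¹) • v) := by
        rw [smul_smul, pow_succ, mul_inv, mul_comm]
      rw [this]
      exact half_smul_nonneg ih

private lemma dyadic_smul_nonneg (m k : ℕ) {v : X} (hv : 0 ≤ v) :
    0 ≤ ((m : ℝ) / (2 : ℝ) ^ k) • v := by
  have : ((m : ℝ) / (2 : ℝ) ^ k) • v = m • ((((2 : ℝ) ^ k)⁻¹) • v) := by
    rw [← Nat.cast_smul_eq_nsmul ℝ, smul_smul, div_eq_mul_inv]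
  rw [this]
  exact nsmul_nonneg (pow_inv_smul_nonneg k hv) m

/-- Key positivity lemma: nonnegative real scalar times positive element is positive. -/
private lemma real_smul_nonneg {r : ℝ} (hr : 0 ≤ r) {v : X} (hv : 0 ≤ v) : 0 ≤ r • v := by
  -- approximate r by dyadic rationals from below
  set q : ℕ → ℝ := fun k => (⌊r * 2 ^ k⌋₊ : ℝ) / 2 ^ k with hq
  have hqr : Tendsto q atTop (𝓝 r) := by
    have hbound : ∀ k : ℕ, ‖q k - r‖ ≤ (2 : ℝ)⁻¹ ^ k := by
      intro k
      have h2k : (0 : ℝ) < 2 ^ k := by positivity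
      have h1 : (⌊r * 2 ^ k⌋₊ : ℝ) ≤ r * 2 ^ k := Nat.floor_le (by positivity)
      have h2 : r * 2 ^ k < ⌊r * 2 ^ k⌋₊ + 1 := Nat.lt_floor_add_one _
      have hle : q k ≤ r := by
        rw [hq]; exact div_le_of_le_mul₀ h2k.le hr (by linarith [h1])
      have hlt : r - q k ≤ (2 : ℝ)⁻¹ ^ k := by
        rw [hq]
        simp only [inv_pow]
        rw [sub_le_iff_le_add, inv_eq_one_div, add_comm, ← add_div, le_div_iff₀ h2k]
        linarith
      rw [Real.norm_eq_abs, abs_of_nonpos (by linarith), neg_sub]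
      exact hlt
    have h0 : Tendsto (fun k : ℕ => q k - r) atTop (𝓝 0) :=
      squeeze_zero_norm hbound (tendsto_pow_atTop_nhds_zero_of_lt_one (by norm_num) (by norm_num))
    have := h0.add (tendsto_const_nhds (x := r))
    simpa using this
  have hcont : Tendsto (fun k => q k • v) atTop (𝓝 (r • v)) :=
    (hqr.smul tendsto_const_nhds)
  have hmem : ∀ k, q k • v ∈ {w : X | 0 ≤ w} := fun k => dyadic_smul_nonneg _ _ hv
  exact isClosed_nonneg.mem_of_tendsto hcont (Eventually.of_forall hmem)

private lemma rsmul_mono_right {r : ℝ} (hr : 0 ≤ r) {a b : X} (hab : a ≤ b) :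
    r • a ≤ r • b := by
  have := real_smul_nonneg hr (sub_nonneg.mpr hab)
  rwa [smul_sub, sub_nonneg] at this

private lemma rsmul_mono_left {r s : ℝ} (hrs : r ≤ s) {v : X} (hv : 0 ≤ v) :
    r • v ≤ s • v := by
  have := real_smul_nonneg (sub_nonneg.mpr hrs) hv
  rwa [sub_smul, sub_nonneg] at this

private lemma abs_smul_le {r : ℝ} (hr : 0 ≤ r) (v : X) : |r • v| ≤ r • |v| := by
  rw [abs_le']
  refine ⟨rsmul_mono_right hr (le_abs_self v), ?_⟩
  rw [← smul_neg]
  exact rsmul_mono_right hr (neg_le_abs v)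

end Aux

theorem stmt_7 {X : Type*} [NormedAddCommGroup X] [Lattice X] [HasSolidNorm X] [IsOrderedAddMonoid X] [NormedSpace ℝ X]
    (h : ∀ x : ℕ → X, Tendsto (fun n => ‖x n‖) atTop (𝓝 0) →
      ∃ φ : ℕ → ℕ, StrictMono φ ∧ ∃ a b : X, ∀ n, x (φ n) ∈ Set.Icc a b)
    (ι : Type*) [Preorder ι] [IsDirected ι (· ≤ ·)] [Nonempty ι]
    (x : ι → X) (hx : Tendsto (fun α => ‖x α‖) atTop (𝓝 0)) :
    ∃ s : ℕ → ι, ∃ u : X, 0 ≤ u ∧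
      ∀ ε : ℝ, 0 < ε → ∃ N : ℕ, ∀ n ≥ N, |x (s n)| ≤ ε • u := by
  have hsel : ∀ n : ℕ, ∃ α : ι, ‖x α‖ ≤ 1 / ((n : ℝ) + 1) ^ 2 := by
    intro n
    have hpos : (0 : ℝ) < 1 / ((n : ℝ) + 1) ^ 2 := by positivity
    exact (hx.eventually (eventually_le_nhds hpos)).exists
  choose t ht using hsel
  set y : ℕ → X := fun n => ((n : ℝ) + 1) • x (t n) with hy
  have hynorm : ∀ n, ‖y n‖ ≤ 1 / ((n : ℝ) + 1) := by
    intro n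
    have h1 : (0 : ℝ) < (n : ℝ) + 1 := by positivity
    calc ‖y n‖ = |(n : ℝ) + 1| * ‖x (t n)‖ := by rw [hy]; simp [norm_smul]
      _ = ((n : ℝ) + 1) * ‖x (t n)‖ := by rw [abs_of_pos h1]
      _ ≤ ((n : ℝ) + 1) * (1 / ((n : ℝ) + 1) ^ 2) :=
          mul_le_mul_of_nonneg_left (ht n) h1.le
      _ = 1 / ((n : ℝ) + 1) := by field_simp
  have hy0 : Tendsto (fun n => ‖y n‖) atTop (𝓝 0) :=
    squeeze_zero (fun n => norm_nonneg _) hynorm tendsto_one_div_add_atTop_nhds_zero_nat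
  obtain ⟨φ, hφ, a, b, hab⟩ := h y hy0
  refine ⟨fun n => t (φ n), |a| ⊔ |b|, le_sup_of_le_left (abs_nonneg a), ?_⟩
  intro ε hε
  obtain ⟨N, hN⟩ := exists_nat_ge (1 / ε)
  refine ⟨N, fun n hn => ?_⟩
  have hc : (0 : ℝ) < (φ n : ℝ) + 1 := by positivity
  have hyb : |y (φ n)| ≤ |a| ⊔ |b| := by
    obtain ⟨h1, h2⟩ := hab n
    rw [abs_le']
    exact ⟨le_trans h2 (le_sup_of_le_right (le_abs_self b)),
      le_trans (neg_le_neg h1) (le_sup_of_le_left (neg_le_abs a))⟩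
  have hxy : x (t (φ n)) = (1 / ((φ n : ℝ) + 1)) • y (φ n) := by
    rw [hy]
    simp only []
    rw [smul_smul, one_div, inv_mul_cancel₀ hc.ne', one_smul]
  have hfrac : (0 : ℝ) ≤ 1 / ((φ n : ℝ) + 1) := by positivity
  calc |x (t (φ n))| = |(1 / ((φ n : ℝ) + 1)) • y (φ n)| := by rw [hxy]
    _ ≤ (1 / ((φ n : ℝ) + 1)) • |y (φ n)| := abs_smul_le hfrac _
    _ ≤ (1 / ((φ n : ℝ) + 1)) • (|a| ⊔ |b|) := rsmul_mono_right hfrac hyb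
    _ ≤ ε • (|a| ⊔ |b|) := by
        refine rsmul_mono_left ?_ (le_sup_of_le_left (abs_nonneg a))
        rw [div_le_iff₀ hc]
        have hNφ : (N : ℝ) ≤ (φ n : ℝ) := by exact_mod_cast le_trans hn (hφ.id_le n)
        have : 1 / ε ≤ (φ n : ℝ) + 1 := by linarith
        rw [div_le_iff₀ hε] at this
        linarith [this]
end

section
/- In a normed lattice X, if every norm-null net in X contains (as a set) a relatively uniformly null sequence, then every relatively uniformly closed subset of X is norm closed. -/
open Filter Topology

universe u

theorem stmt_8 {X : Type u} [NormedAddCommGroup X] [Lattice X] [HasSolidNorm X]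
    [IsOrderedAddMonoid X] [NormedSpace ℝ X]
    (h : ∀ (ι : Type u) [Preorder ι] [IsDirected ι (· ≤ ·)] [Nonempty ι]
      (x : ι → X), Tendsto (fun α => ‖x α‖) atTop (𝓝 0) →
      ∃ s : ℕ → X, (∀ n, s n ∈ Set.range x) ∧ ∃ u : X, 0 ≤ u ∧
        ∀ ε : ℝ, 0 < ε → ∃ N : ℕ, ∀ n ≥ N, |s n| ≤ ε • u)
    (C : Set X)
    (hC : ∀ (s : ℕ → X) (x : X), (∀ n, s n ∈ C) →
      (∃ u : X, 0 ≤ u ∧ ∀ ε : ℝ, 0 < ε → ∃ N : ℕ, ∀ n ≥ N, |x - s n| ≤ ε • u) →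
      x ∈ C) :
    IsClosed C := by
  apply IsSeqClosed.isClosed
  intro c x hc hcx
  have hnorm : Tendsto (fun n : ℕ => ‖c n - x‖) atTop (𝓝 0) :=
    tendsto_iff_norm_sub_tendsto_zero.mp hcx
  have hdown : Tendsto (fun α : ULift.{u} ℕ => α.down) atTop atTop := by
    apply tendsto_atTop_atTop.mpr
    intro b
    exact ⟨ULift.up b, fun a ha => ha⟩
  obtain ⟨s, hs_range, u, hu, hru⟩ :=
    h (ULift.{u} ℕ) (fun α => c α.down - x) (hnorm.comp hdown)
  refine hC (fun n => x + s n) x (fun n => ?_) ⟨u, hu, fun ε hε => ?_⟩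
  · obtain ⟨α, hα⟩ := hs_range n
    simpa [← hα] using hc α.down
  · obtain ⟨N, hN⟩ := hru ε hε
    exact ⟨N, fun n hn => by simpa using hN n hn⟩
end

section
/- In a normed lattice X, if every relatively uniformly closed subset of X is norm closed, then every norm-null sequence in X has an order bounded subsequence. -/
open Filter Topology

theorem stmt_9 {X : Type*} [NormedAddCommGroup X] [Lattice X] [HasSolidNorm X] [IsOrderedAddMonoid X] [NormedSpace ℝ X]
    (h : ∀ C : Set X,
      (∀ (s : ℕ → X) (x : X), (∀ n, s n ∈ C) →
        (∃ u : X, 0 ≤ u ∧ ∀ ε : ℝ, 0 < ε → ∃ N : ℕ, ∀ n ≥ N, |x - s n| ≤ ε • u) →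
        x ∈ C) → IsClosed C)
    (x : ℕ → X) (hx : Tendsto (fun n => ‖x n‖) atTop (𝓝 0)) :
    ∃ φ : ℕ → ℕ, StrictMono φ ∧ ∃ a b : X, ∀ n, x (φ n) ∈ Set.Icc a b := by
  by_contra hcon
  push_neg at hcon
  -- every order interval contains only finitely many terms of the sequence
  have hfin : ∀ a b : X, {n | x n ∈ Set.Icc a b}.Finite := by
    intro a b
    by_contra hinf
    obtain ⟨n, hn⟩ := hcon (Nat.nth _) (Nat.nth_strictMono hinf) a b
    exact hn (Nat.nth_mem_of_infinite hinf n)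
  set C : Set X := {v | v ∈ Set.range x ∧ v ≠ 0} with hCdef
  have hclosed : IsClosed C := by
    apply h
    intro s y hsC hru
    obtain ⟨u, hu0, hε⟩ := hru
    obtain ⟨N, hN⟩ := hε 1 one_pos
    -- the tail of s takes values in a finite set
    have hsub : {v | ∃ n, N ≤ n ∧ s n = v} ⊆
        x '' {m | x m ∈ Set.Icc (y - u) (y + u)} := by
      rintro v ⟨n, hnN, rfl⟩
      obtain ⟨m, hm⟩ := (hsC n).1
      refine ⟨m, ?_, hm⟩
      have h1 : |y - s n| ≤ u := by simpa using hN n hnN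
      obtain ⟨h1a, h1b⟩ := abs_le'.mp h1
      show x m ∈ Set.Icc (y - u) (y + u)
      rw [hm]
      have h1b' : s n - y ≤ u := by rwa [neg_sub] at h1b
      exact ⟨sub_le_comm.mp h1a, sub_le_iff_le_add'.mp h1b'⟩
    have hVfin : {v | ∃ n, N ≤ n ∧ s n = v}.Finite :=
      Set.Finite.subset (Set.Finite.image x (hfin _ _)) hsub
    -- s tends to y in norm
    have htend : Tendsto (fun n => s (n + N)) atTop (𝓝 y) := by
      rw [Metric.tendsto_atTop]
      intro δ hδ
      have hεpos : 0 < δ / (‖u‖ + 1) := by positivity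
      obtain ⟨N', hN'⟩ := hε _ hεpos
      refine ⟨N', fun n hn => ?_⟩
      have hle : |y - s (n + N)| ≤ (δ / (‖u‖ + 1)) • u := hN' _ (le_trans hn (Nat.le_add_right _ _))
      have hnorm : ‖y - s (n + N)‖ ≤ ‖(δ / (‖u‖ + 1)) • u‖ :=
        norm_le_norm_of_abs_le_abs (hle.trans (le_abs_self _))
      rw [norm_smul, Real.norm_eq_abs, abs_of_pos hεpos] at hnorm
      have : δ / (‖u‖ + 1) * ‖u‖ < δ := by
        have h1 : δ / (‖u‖ + 1) * ‖u‖ < δ / (‖u‖ + 1) * (‖u‖ + 1) := by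
          apply mul_lt_mul_of_pos_left (by linarith) hεpos
        have h2 : δ / (‖u‖ + 1) * (‖u‖ + 1) = δ := by
          field_simp
        linarith
      calc dist (s (n + N)) y = ‖y - s (n + N)‖ := by rw [dist_eq_norm, norm_sub_rev]
        _ ≤ δ / (‖u‖ + 1) * ‖u‖ := hnorm
        _ < δ := this
    -- hence y belongs to the (closed) finite value set
    have hy : y ∈ {v | ∃ n, N ≤ n ∧ s n = v} := by
      apply hVfin.isClosed.mem_of_tendsto htend
      filter_upwards with n
      exact ⟨n + N, Nat.le_add_left _ _, rfl⟩
    obtain ⟨n, _, hn⟩ := hy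
    rw [← hn]
    exact hsC n
  -- x n ≠ 0 eventually
  have hne : ∀ᶠ n in atTop, x n ∈ C := by
    have hfin0 : {n | x n = 0}.Finite := by
      have := hfin 0 0
      simpa [Set.Icc_self] using this
    obtain ⟨N, hN⟩ := (hfin0.bddAbove).imp fun N hN => hN
    filter_upwards [eventually_gt_atTop N] with n hn
    refine ⟨Set.mem_range_self n, fun h0 => ?_⟩
    exact absurd (hN h0) (not_le.mpr hn)
  have hx0 : Tendsto x atTop (𝓝 0) := by
    rw [tendsto_zero_iff_norm_tendsto_zero]
    exact hx
  have h0C : (0 : X) ∈ C := hclosed.mem_of_tendsto hx0 hne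
  exact h0C.2 rfl
end

section
/- Let I be a non-meager P-ideal on ℕ (characterized by: I is a proper ideal containing all finite sets, and for every sequence (A_n) ⊆ I with A_n ⊆ ℕ \ {1,...,n−1} there is an infinite M ⊆ ℕ with ⋃_{n∈M} A_n ∈ I). Let G = {bounded sequences whose support lies in I} and H = {h ∈ ℓ∞ : 2^k h(k) → 0}, and X = G + H ⊆ ℓ∞ with the sup norm. Then the sequence (2^{−n} e_n), where e_n is the indicator of {n}, is not order bounded in X. -/
open Filter Topology

/-- Bounded real sequences whose support belongs to the ideal `I`. -/
def memG (I : Set (Set ℕ)) (g : ℕ → ℝ) : Prop :=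
  (∃ C : ℝ, ∀ k, |g k| ≤ C) ∧ Function.support g ∈ I

/-- Bounded real sequences `h` with `2^k h(k) → 0`. -/
def memH (h : ℕ → ℝ) : Prop :=
  (∃ C : ℝ, ∀ k, |h k| ≤ C) ∧ Tendsto (fun k => (2 : ℝ) ^ k * h k) atTop (𝓝 0)

/-- The sum `X = G + H`. -/
def memX (I : Set (Set ℕ)) (f : ℕ → ℝ) : Prop :=
  ∃ g h : ℕ → ℝ, memG I g ∧ memH h ∧ f = g + h
theorem stmt_14 (I : Set (Set ℕ))
    (hI_subset : ∀ A B : Set ℕ, A ∈ I → B ⊆ A → B ∈ I)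
    (hI_union : ∀ A B : Set ℕ, A ∈ I → B ∈ I → A ∪ B ∈ I)
    (hI_fin : ∀ A : Set ℕ, A.Finite → A ∈ I)
    (hI_proper : (Set.univ : Set ℕ) ∉ I)
    (hI_P : ∀ A : ℕ → Set ℕ, (∀ n, A n ∈ I) → (∀ n, A n ⊆ {k | n ≤ k}) →
      ∃ M : Set ℕ, M.Infinite ∧ (⋃ n ∈ M, A n) ∈ I) :
    ¬ ∃ a b : ℕ → ℝ, memX I a ∧ memX I b ∧
      ∀ n k : ℕ, a k ≤ ((2 : ℝ) ^ n)⁻¹ * (if k = n then 1 else 0) ∧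
        ((2 : ℝ) ^ n)⁻¹ * (if k = n then 1 else 0) ≤ b k := by
  rintro ⟨a, b, -, ⟨g, h, ⟨-, hg⟩, ⟨-, hh⟩, rfl⟩, hb⟩
  have hinf : (Function.support g)ᶜ.Infinite := by
    by_contra hfin
    rw [Set.not_infinite] at hfin
    have := hI_union _ _ hg (hI_fin _ hfin)
    rw [Set.union_compl_self] at this
    exact hI_proper this
  have := Metric.tendsto_atTop.mp hh 1 one_pos
  obtain ⟨K, hK⟩ := this
  obtain ⟨k, hk, hKk⟩ := hinf.exists_gt K
  have hg0 : g k = 0 := Function.notMem_support.mp hk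
  have hbk := (hb k k).2
  simp only [eq_self_iff_true, if_true, mul_one, Pi.add_apply, hg0, zero_add] at hbk
  have h1 : (1 : ℝ) ≤ (2 : ℝ) ^ k * h k := by
    rw [← mul_inv_cancel₀ (a := (2:ℝ)^k) (by positivity)]
    exact mul_le_mul_of_nonneg_left hbk (by positivity)
  have := hK k hKk.le
  rw [Real.dist_eq, sub_zero] at this
  linarith [le_abs_self ((2:ℝ)^k * h k)]
end

section
/- With I a non-meager P-ideal on ℕ, G = {bounded sequences with support in I}, H = {h ∈ ℓ∞ : 2^k h(k) → 0}, and X = G + H with the sup norm: every sequence (f_n) ⊆ X with ‖f_n‖_∞ → 0 has an order bounded subsequence in X. -/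
open Filter Topology

theorem stmt_15 (I : Set (Set ℕ))
    (hI_subset : ∀ A B : Set ℕ, A ∈ I → B ⊆ A → B ∈ I)
    (hI_union : ∀ A B : Set ℕ, A ∈ I → B ∈ I → A ∪ B ∈ I)
    (hI_fin : ∀ A : Set ℕ, A.Finite → A ∈ I)
    (hI_proper : (Set.univ : Set ℕ) ∉ I)
    (hI_P : ∀ A : ℕ → Set ℕ, (∀ n, A n ∈ I) → (∀ n, A n ⊆ {k | n ≤ k}) →
      ∃ M : Set ℕ, M.Infinite ∧ (⋃ n ∈ M, A n) ∈ I)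
    (f : ℕ → ℕ → ℝ) (hf : ∀ n, memX I (f n))
    (M : ℕ → ℝ) (hM : ∀ n k, |f n k| ≤ M n) (hM0 : Tendsto M atTop (𝓝 0)) :
    ∃ φ : ℕ → ℕ, StrictMono φ ∧ ∃ a b : ℕ → ℝ, memX I a ∧ memX I b ∧
      ∀ n k, a k ≤ f (φ n) k ∧ f (φ n) k ≤ b k := by
  classical
  -- Step 1: extract a subsequence with `M (φ n) ≤ (1/4)^n`.
  obtain ⟨φ, hφmono, hφle⟩ :
      ∃ φ : ℕ → ℕ, StrictMono φ ∧ ∀ n, M (φ n) ≤ (1/4 : ℝ) ^ n := by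
    exact extraction_forall_of_eventually (P := fun n k => M k ≤ (1/4 : ℝ) ^ n)
      (fun n => hM0.eventually (eventually_le_nhds (by positivity)))
  -- Step 2: decompose each `f (φ n)` as `g + h`.
  choose g h hg hh hfgh using fun n => hf (φ n)
  set A : ℕ → Set ℕ := fun n => Function.support (g n) with hA_def
  have hA : ∀ n, A n ∈ I := fun n => (hg n).2
  -- Redecompose: `h' n` is `f (φ n)` off `A n`, zero on `A n`.
  set h' : ℕ → ℕ → ℝ := fun n k => if k ∈ A n then 0 else f (φ n) k with hh'_def
  have h'tend : ∀ n, Tendsto (fun k => (2:ℝ) ^ k * h' n k) atTop (𝓝 0) := by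
    intro n
    apply squeeze_zero_norm (a := fun k => |(2:ℝ) ^ k * h n k|)
    · intro k
      show |(2:ℝ) ^ k * h' n k| ≤ |(2:ℝ) ^ k * h n k|
      by_cases hk : k ∈ A n
      · simp [hh'_def, hk, abs_nonneg]
      · have hg0 : g n k = 0 := Function.notMem_support.mp hk
        have : f (φ n) k = h n k := by rw [hfgh n]; simp [hg0]
        simp [hh'_def, hk, this, le_refl]
    · simpa using (hh n).2.abs
  have h'abs : ∀ n, Tendsto (fun k => |(2:ℝ) ^ k * h' n k|) atTop (𝓝 0) := fun n => by
    simpa using (h'tend n).abs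
  -- Step 3: choose cut-offs `K n` with `|2^k * h' n k| ≤ (1/2)^n` for `k ≥ K n`.
  have hKex : ∀ n, ∃ K : ℕ, ∀ k, K ≤ k → |(2:ℝ) ^ k * h' n k| ≤ (1/2 : ℝ) ^ n := by
    intro n
    have := (h'abs n).eventually (eventually_le_nhds (show (0:ℝ) < (1/2)^n by positivity))
    exact eventually_atTop.mp this
  choose K hK using hKex
  -- Step 4: apply the P-property.
  set D : ℕ → Set ℕ := fun n => (A n ∪ Set.Iio (K n)) ∩ Set.Ici n with hD_def
  have hDI : ∀ n, D n ∈ I := fun n =>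
    hI_subset _ _ (hI_union _ _ (hA n) (hI_fin _ (Set.finite_Iio _))) Set.inter_subset_left
  have hDsub : ∀ n, D n ⊆ {k | n ≤ k} := fun n k hk => hk.2
  obtain ⟨Mi, hMi_inf, hMi_I⟩ := hI_P D hDI hDsub
  set S : Set ℕ := ⋃ n ∈ Mi, D n with hS_def
  -- the subsequence
  have hMi_inf' : (setOf (· ∈ Mi)).Infinite := hMi_inf
  set ψ : ℕ → ℕ := Nat.nth (· ∈ Mi) with hψ_def
  have hψmono : StrictMono ψ := Nat.nth_strictMono hMi_inf'
  have hψmem : ∀ n, ψ n ∈ Mi := fun n => Nat.nth_mem_of_infinite hMi_inf' n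
  -- the dominating `H`-part
  set e : ℕ → ℕ → ℝ := fun n k => if K n ≤ k then |h' n k| else 0 with he_def
  have he_nonneg : ∀ n k, 0 ≤ e n k := by
    intro n k; by_cases hk : K n ≤ k <;> simp [he_def, hk, abs_nonneg]
  have he_le : ∀ n k, e n k ≤ (1/2 : ℝ) ^ n * (1/2 : ℝ) ^ k := by
    intro n k
    by_cases hk : K n ≤ k
    · have h2 : (2:ℝ) ^ k * |h' n k| ≤ (1/2) ^ n := by
        have := hK n k hk
        rwa [abs_mul, abs_of_pos (show (0:ℝ) < 2 ^ k by positivity)] at this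
      have hpow : ((1:ℝ)/2) ^ k = ((2:ℝ) ^ k)⁻¹ := by
        rw [one_div, inv_pow]
      simp only [he_def, hk, if_true]
      rw [hpow, ← div_eq_mul_inv, le_div_iff₀ (show (0:ℝ) < 2 ^ k by positivity)]
      calc |h' n k| * 2 ^ k = 2 ^ k * |h' n k| := by ring
        _ ≤ (1/2) ^ n := h2
    · simp only [he_def, hk, if_false]
      positivity
  have he_summable : ∀ k, Summable (fun n => e n k) := by
    intro k
    apply Summable.of_nonneg_of_le (fun n => he_nonneg n k) (fun n => he_le n k)
    exact (summable_geometric_of_lt_one (by norm_num) (by norm_num)).mul_right _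
  set hb : ℕ → ℝ := fun k => (1/4 : ℝ) ^ k + ∑' n, e n k with hhb_def
  have htsum_nonneg : ∀ k, 0 ≤ ∑' n, e n k := fun k => tsum_nonneg (fun n => he_nonneg n k)
  have htsum_le : ∀ k, ∑' n, e n k ≤ 2 := by
    intro k
    calc ∑' n, e n k ≤ ∑' n, (1/2 : ℝ) ^ n * (1/2 : ℝ) ^ k := by
          apply Summable.tsum_le_tsum (fun n => he_le n k) (he_summable k)
          exact (summable_geometric_of_lt_one (by norm_num) (by norm_num)).mul_right _
      _ ≤ ∑' n, (1/2 : ℝ) ^ n := by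
          apply Summable.tsum_le_tsum _ ((summable_geometric_of_lt_one (by norm_num)
            (by norm_num)).mul_right _) (summable_geometric_of_lt_one (by norm_num) (by norm_num))
          intro n
          have h1 : ((1:ℝ)/2) ^ k ≤ 1 := pow_le_one₀ (by norm_num) (by norm_num)
          nlinarith [pow_nonneg (show (0:ℝ) ≤ 1/2 by norm_num) n,
            pow_nonneg (show (0:ℝ) ≤ 1/2 by norm_num) k]
      _ = 2 := tsum_geometric_two
  have hhb_nonneg : ∀ k, 0 ≤ hb k := by
    intro k; have := htsum_nonneg k
    simp only [hhb_def]; positivity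
  have hhb_memH : memH hb := by
    constructor
    · refine ⟨3, fun k => ?_⟩
      rw [abs_of_nonneg (hhb_nonneg k)]
      have h1 : ((1:ℝ)/4) ^ k ≤ 1 := pow_le_one₀ (by norm_num) (by norm_num)
      have := htsum_le k
      simp only [hhb_def]; linarith
    · have heq : ∀ k, (2:ℝ) ^ k * hb k = (1/2 : ℝ) ^ k + ∑' n, (2:ℝ) ^ k * e n k := by
        intro k
        rw [hhb_def]
        rw [mul_add, tsum_mul_left]
        congr 1
        rw [← mul_pow]; norm_num
      rw [show (0:ℝ) = 0 + 0 by norm_num]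
      refine Tendsto.congr (fun k => (heq k).symm) (Tendsto.add ?_ ?_)
      · exact tendsto_pow_atTop_nhds_zero_of_lt_one (by norm_num) (by norm_num)
      · have : (0:ℝ) = ∑' (n : ℕ), (0:ℝ) := by simp
        rw [this]
        apply tendsto_tsum_of_dominated_convergence
          (bound := fun n => (1/2 : ℝ) ^ n)
          (summable_geometric_of_lt_one (by norm_num) (by norm_num))
        · intro n
          -- Tendsto (fun k => 2^k * e n k) atTop (𝓝 0)
          apply (h'abs n).congr'
          filter_upwards [eventually_ge_atTop (K n)] with k hk
          rw [abs_mul, abs_of_pos (show (0:ℝ) < 2 ^ k by positivity)]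
          simp [he_def, hk]
        · filter_upwards with k n
          rw [Real.norm_eq_abs, abs_of_nonneg (by positivity : (0:ℝ) ≤ 2 ^ k * e n k)]
          have := he_le n k
          have h2 : (2:ℝ) ^ k * e n k ≤ 2 ^ k * ((1/2) ^ n * (1/2) ^ k) :=
            mul_le_mul_of_nonneg_left this (by positivity)
          calc (2:ℝ) ^ k * e n k ≤ 2 ^ k * ((1/2) ^ n * (1/2) ^ k) := h2
            _ = (1/2) ^ n * (2 * (1/2)) ^ k := by rw [mul_pow]; ring
            _ = (1/2) ^ n := by norm_num
  -- the dominating `G`-part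
  set gb : ℕ → ℝ := S.indicator (fun _ => (1:ℝ)) with hgb_def
  have hgb_memG : memG I gb := by
    constructor
    · refine ⟨1, fun k => ?_⟩
      by_cases hk : k ∈ S <;> simp [hgb_def, Set.indicator, hk]
    · exact hI_subset _ _ hMi_I Set.support_indicator_subset
  have hgb_nonneg : ∀ k, 0 ≤ gb k := fun k => Set.indicator_nonneg (fun _ _ => zero_le_one) k
  set b : ℕ → ℝ := fun k => gb k + hb k with hb_def
  refine ⟨φ ∘ ψ, hφmono.comp hψmono, fun k => -(b k), b,
    ⟨fun k => -(gb k), fun k => -(hb k), ?_, ?_, by funext k; simp [hb_def]; ring⟩,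
    ⟨gb, hb, hgb_memG, hhb_memH, rfl⟩, ?_⟩
  · constructor
    · obtain ⟨C, hC⟩ := hgb_memG.1
      exact ⟨C, fun k => by simpa using hC k⟩
    · have : Function.support (fun k => -(gb k)) = Function.support gb := by
        simp [Function.support_fun_neg]
      rw [this]; exact hgb_memG.2
  · constructor
    · obtain ⟨C, hC⟩ := hhb_memH.1
      exact ⟨C, fun k => by simpa using hC k⟩
    · have : Tendsto (fun k => -((2:ℝ) ^ k * hb k)) atTop (𝓝 (-0)) := hhb_memH.2.neg
      simpa [mul_neg] using this
  -- the domination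
  intro n k
  have habs : |f ((φ ∘ ψ) n) k| ≤ b k := by
    set m := ψ n with hm_def
    have hmMi : m ∈ Mi := hψmem n
    have hfm : |f (φ m) k| ≤ (1/4 : ℝ) ^ m := le_trans (hM (φ m) k) (hφle m)
    by_cases hkD : k ∈ D m
    · -- k ∈ S, so b k ≥ 1
      have hkS : k ∈ S := Set.mem_biUnion hmMi hkD
      have : gb k = 1 := Set.indicator_of_mem hkS _
      have h1 : ((1:ℝ)/4) ^ m ≤ 1 := pow_le_one₀ (by norm_num) (by norm_num)
      have := hhb_nonneg k
      simp only [hb_def, Function.comp_apply]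
      have hgb1 : gb k = 1 := Set.indicator_of_mem hkS _
      calc |f (φ m) k| ≤ 1 := le_trans hfm h1
        _ ≤ gb k + hb k := by rw [hgb1]; linarith
    · by_cases hkm : m ≤ k
      · -- then k ∉ A m and K m ≤ k
        have hkAK : k ∉ A m ∪ Set.Iio (K m) := by
          intro hmem; exact hkD ⟨hmem, hkm⟩
        have hkA : k ∉ A m := fun h => hkAK (Or.inl h)
        have hkK : K m ≤ k := le_of_not_gt (fun h => hkAK (Or.inr h))
        have hfe : |f (φ m) k| = e m k := by
          simp [he_def, hkK, hh'_def, hkA]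
        have hle : e m k ≤ ∑' j, e j k :=
          Summable.le_tsum (he_summable k) m (fun j _ => he_nonneg j k)
        have := hgb_nonneg k
        simp only [hb_def, Function.comp_apply]
        have h4 : (0:ℝ) ≤ (1/4) ^ k := by positivity
        rw [hfe]
        calc e m k ≤ ∑' j, e j k := hle
          _ ≤ hb k := by simp only [hhb_def]; linarith [h4]
          _ ≤ gb k + hb k := by linarith
      · -- k < m : |f| ≤ (1/4)^m ≤ (1/4)^k
        have hkm' : k ≤ m := le_of_lt (lt_of_not_ge hkm)
        have h14 : ((1:ℝ)/4) ^ m ≤ (1/4) ^ k :=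
          pow_le_pow_of_le_one (by norm_num) (by norm_num) hkm'
        have := hgb_nonneg k
        have := htsum_nonneg k
        simp only [hb_def, Function.comp_apply]
        calc |f (φ m) k| ≤ (1/4 : ℝ) ^ k := le_trans hfm h14
          _ ≤ gb k + hb k := by simp only [hhb_def]; linarith
  exact abs_le.mp habs
end

section
/- Let X be a normed lattice and (e_n) ⊆ X_+ a sequence with ‖e_n‖ ≤ 2^{−n}. Define μ(A) = inf{‖x‖ : x ∈ X_+, x ≥ e_i for all i ∈ A} for A ⊆ ℕ (with inf ∅ = ∞). Then μ is a submeasure: μ(∅) = 0, μ is monotone, and μ(A ∪ B) ≤ μ(A) + μ(B); moreover μ(A) ≤ 2^{1−min A} for every nonempty finite A. -/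
open scoped ENNReal

theorem stmt_16 {X : Type*} [NormedAddCommGroup X] [Lattice X] [HasSolidNorm X]
    [IsOrderedAddMonoid X]
    (e : ℕ → X) (he_pos : ∀ n, 0 ≤ e n) (he : ∀ n, ‖e n‖ ≤ (2 : ℝ)⁻¹ ^ n)
    (μ : Set ℕ → ℝ≥0∞)
    (hμ : ∀ A : Set ℕ, μ A =
      sInf {r : ℝ≥0∞ | ∃ x : X, 0 ≤ x ∧ (∀ i ∈ A, e i ≤ x) ∧ r = ENNReal.ofReal ‖x‖}) :
    μ ∅ = 0 ∧ (∀ A B : Set ℕ, A ⊆ B → μ A ≤ μ B) ∧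
      (∀ A B : Set ℕ, μ (A ∪ B) ≤ μ A + μ B) ∧
      (∀ A : Set ℕ, A.Finite → A.Nonempty → μ A ≤ (2 : ℝ≥0∞) ^ (1 - ((sInf A : ℕ) : ℤ))) := by
  refine ⟨?_, ?_, ?_, ?_⟩
  · rw [hμ]
    refine le_antisymm ?_ (zero_le)
    refine sInf_le ⟨0, le_refl 0, by simp, by simp⟩
  · intro A B hAB
    rw [hμ, hμ]
    exact sInf_le_sInf fun r ⟨x, hx, hd, hr⟩ => ⟨x, hx, fun i hi => hd i (hAB hi), hr⟩
  · intro A B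
    rw [hμ, hμ, hμ, ENNReal.sInf_add]
    refine le_iInf₂ fun r ⟨x, hx, hdx, hrx⟩ => ?_
    rw [add_comm, ENNReal.sInf_add]
    refine le_iInf₂ fun s ⟨y, hy, hdy, hsy⟩ => ?_
    rw [add_comm]
    refine le_trans (sInf_le ⟨x + y, add_nonneg hx hy, ?_, rfl⟩) ?_
    · rintro i (hi | hi)
      · exact le_trans (hdx i hi) (le_add_of_nonneg_right hy)
      · exact le_trans (hdy i hi) (le_add_of_nonneg_left hx)
    · rw [hrx, hsy, ← ENNReal.ofReal_add (norm_nonneg x) (norm_nonneg y)]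
      exact ENNReal.ofReal_le_ofReal (norm_add_le x y)
  · intro A hA hne
    rw [hμ]
    set m := sInf A with hm
    set x := ∑ i ∈ hA.toFinset, e i with hxdef
    have hx : 0 ≤ x := Finset.sum_nonneg fun i _ => he_pos i
    have hdx : ∀ i ∈ A, e i ≤ x := by
      intro i hi
      exact Finset.single_le_sum (fun j _ => he_pos j) (hA.mem_toFinset.mpr hi)
    refine le_trans (sInf_le ⟨x, hx, hdx, rfl⟩) ?_
    have hN : hA.toFinset.Nonempty := hA.toFinset_nonempty.mpr hne
    set N := hA.toFinset.max' hN with hNdef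
    have hsub : hA.toFinset ⊆ Finset.Ico m (N + 1) := by
      intro i hi
      simp only [Finset.mem_Ico]
      exact ⟨Nat.sInf_le (hA.mem_toFinset.mp hi), Nat.lt_succ_of_le (Finset.le_max' _ _ hi)⟩
    have hnorm : ‖x‖ ≤ 2 * (2 : ℝ)⁻¹ ^ m := by
      calc ‖x‖ ≤ ∑ i ∈ hA.toFinset, ‖e i‖ := norm_sum_le _ _
        _ ≤ ∑ i ∈ hA.toFinset, (2 : ℝ)⁻¹ ^ i := Finset.sum_le_sum fun i _ => he i
        _ ≤ ∑ i ∈ Finset.Ico m (N + 1), (2 : ℝ)⁻¹ ^ i :=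
            Finset.sum_le_sum_of_subset_of_nonneg hsub (fun i _ _ => by positivity)
        _ ≤ 2 * (2 : ℝ)⁻¹ ^ m := by
            rw [geom_sum_Ico' (by norm_num) ((Finset.le_max' _ m (hA.mem_toFinset.mpr (Nat.sInf_mem hne))).trans (Nat.le_succ N))]
            have h1 : (0:ℝ) ≤ (2:ℝ)⁻¹ ^ (N.succ) := by positivity
            rw [show (1 - (2:ℝ)⁻¹) = 2⁻¹ by norm_num, div_le_iff₀ (by norm_num)]
            linarith
    calc ENNReal.ofReal ‖x‖ ≤ ENNReal.ofReal (2 * (2 : ℝ)⁻¹ ^ m) :=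
          ENNReal.ofReal_le_ofReal hnorm
      _ = (2 : ℝ≥0∞) ^ (1 - (m : ℤ)) := by
          rw [ENNReal.ofReal_mul (by norm_num), ENNReal.ofReal_pow (by norm_num),
            ENNReal.ofReal_inv_of_pos (by norm_num), ENNReal.ofReal_ofNat,
            sub_eq_add_neg, ENNReal.zpow_add (by norm_num) (by norm_num), zpow_one,
            ENNReal.zpow_neg, zpow_natCast, ENNReal.inv_pow]
end

section
/- Let X be a normed lattice in which every norm-null sequence has an order bounded subsequence, but which is not majorizing in its norm completion. Then there exists a positive sequence (e_n) in X with ‖e_n‖ ≤ 2^{−n} for all n such that (e_n) is not order bounded. -/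
open Filter Topology

private lemma nsmul_pow_two_semiclosed' {α : Type*} [Lattice α] [AddCommGroup α]
    [CovariantClass α α (· + ·) (· ≤ ·)] {a : α} :
    ∀ k : ℕ, 0 ≤ 2 ^ k • a → 0 ≤ a := by
  intro k
  induction k with
  | zero => intro h; simpa using h
  | succ k ih =>
      intro h
      apply ih
      apply nsmul_two_semiclosed
      rwa [← mul_nsmul, ← pow_succ]

private lemma sum_pow_two_eq (N : ℕ) :
    (∑ n ∈ Finset.range N, 2 ^ (N - n)) = 2 ^ (N + 1) - 2 := by
  induction N with
  | zero => simp
  | succ N ih =>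
      rw [Finset.sum_range_succ']
      have h1 : ∀ n ∈ Finset.range N, 2 ^ (N + 1 - (n + 1)) = 2 ^ (N - n) := by
        intro n hn; congr 1; omega
      rw [Finset.sum_congr rfl h1, ih]
      have : 2 ≤ 2 ^ (N + 1) := by
        calc (2:ℕ) = 2 ^ 1 := rfl
        _ ≤ 2 ^ (N + 1) := Nat.pow_le_pow_right (by norm_num) (by omega)
      simp only [Nat.sub_zero]
      rw [pow_succ 2 (N + 1)]
      omega

theorem stmt_18 {X Y : Type*} [NormedAddCommGroup X] [Lattice X]
    [IsOrderedAddMonoid X] [HasSolidNorm X]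
    [NormedAddCommGroup Y] [Lattice Y] [IsOrderedAddMonoid Y] [HasSolidNorm Y]
    [CompleteSpace Y]
    (f : X → Y) (hf_iso : Isometry f)
    (hf_add : ∀ a b : X, f (a + b) = f a + f b)
    (hf_sup : ∀ a b : X, f (a ⊔ b) = f a ⊔ f b)
    (hf_dense : DenseRange f)
    (hsub : ∀ x : ℕ → X, Tendsto (fun n => ‖x n‖) atTop (𝓝 0) →
      ∃ φ : ℕ → ℕ, StrictMono φ ∧ ∃ a b : X, ∀ n, x (φ n) ∈ Set.Icc a b)
    (hnotmaj : ¬ ∀ z : Y, ∃ x : X, z ≤ f x) :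
    ∃ e : ℕ → X, (∀ n, 0 ≤ e n) ∧ (∀ n, ‖e n‖ ≤ (2 : ℝ)⁻¹ ^ n) ∧
      ¬ ∃ a b : X, ∀ n, e n ∈ Set.Icc a b := by
  push_neg at hnotmaj
  obtain ⟨z, hz⟩ := hnotmaj
  -- f is monotone
  have hf_mono : ∀ a b : X, a ≤ b → f a ≤ f b := by
    intro a b hab
    have h := hf_sup a b
    rw [sup_eq_right.2 hab] at h
    rw [h]
    exact le_sup_left
  -- choose fast approximations of z
  have hchoice : ∀ n : ℕ, ∃ x : X, dist z (f x) < (4 : ℝ)⁻¹ ^ n / 2 := by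
    intro n
    exact hf_dense.exists_dist_lt z (by positivity)
  choose x hx using hchoice
  set p : ℕ → X := fun n => (x (n + 1) - x n)⁺ with hp
  have hpnn : ∀ n, 0 ≤ p n := fun n => posPart_nonneg _
  refine ⟨fun n => 2 ^ n • p n, fun n => nsmul_nonneg (hpnn n) _, ?_, ?_⟩
  · -- norm estimate
    intro n
    have h1 : ‖p n‖ ≤ ‖x (n + 1) - x n‖ := by
      apply HasSolidNorm.solid
      rw [abs_of_nonneg (hpnn n)]
      exact sup_le (le_abs_self _) (abs_nonneg _)
    have h2 : ‖x (n + 1) - x n‖ ≤ (4 : ℝ)⁻¹ ^ n := by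
      rw [← dist_eq_norm, ← hf_iso.dist_eq]
      have ha := hx (n + 1)
      have hb := hx n
      rw [dist_comm] at ha
      calc dist (f (x (n + 1))) (f (x n))
          ≤ dist (f (x (n + 1))) z + dist z (f (x n)) := dist_triangle _ _ _
        _ ≤ (4 : ℝ)⁻¹ ^ (n + 1) / 2 + (4 : ℝ)⁻¹ ^ n / 2 := by
            exact add_le_add ha.le hb.le
        _ ≤ (4 : ℝ)⁻¹ ^ n := by
            rw [pow_succ]
            have hpos : (0 : ℝ) < (4 : ℝ)⁻¹ ^ n := by positivity
            nlinarith
    calc ‖2 ^ n • p n‖ ≤ (2 ^ n : ℕ) * ‖p n‖ := norm_nsmul_le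
      _ ≤ (2 ^ n : ℕ) * (4 : ℝ)⁻¹ ^ n := by
          apply mul_le_mul_of_nonneg_left (h1.trans h2) (by positivity)
      _ = (2 : ℝ)⁻¹ ^ n := by
          push_cast
          rw [← mul_pow]
          norm_num
  · -- not order bounded
    rintro ⟨a, b, hab⟩
    have hub : ∀ n, 2 ^ n • p n ≤ b := fun n => (hab n).2
    -- partial sums of p are uniformly order bounded by 2 • b⁺
    have hsum : ∀ N, (∑ n ∈ Finset.range N, p n) ≤ 2 • b⁺ := by
      intro N
      apply sub_nonneg.1
      apply nsmul_pow_two_semiclosed' N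
      rw [smul_sub, sub_nonneg]
      calc (2 ^ N : ℕ) • ∑ n ∈ Finset.range N, p n
          = ∑ n ∈ Finset.range N, (2 ^ N : ℕ) • p n := by
            rw [Finset.smul_sum]
        _ ≤ ∑ n ∈ Finset.range N, (2 ^ (N - n) : ℕ) • b⁺ := by
            apply Finset.sum_le_sum
            intro n hn
            have hn' : n < N := Finset.mem_range.1 hn
            have he : (2 ^ N : ℕ) = 2 ^ n * 2 ^ (N - n) := by
              rw [← pow_add]; congr 1; omega
            rw [he, mul_nsmul]
            refine (nsmul_le_nsmul_right ((hub n).trans (le_posPart b)) _)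
        _ = (∑ n ∈ Finset.range N, 2 ^ (N - n) : ℕ) • b⁺ :=
            Finset.sum_smul.symm
        _ ≤ (2 ^ (N + 1) : ℕ) • b⁺ := by
            apply nsmul_le_nsmul_left (posPart_nonneg b)
            rw [sum_pow_two_eq]
            exact Nat.sub_le _ _
        _ = (2 ^ N : ℕ) • 2 • b⁺ := by
            rw [← mul_nsmul, mul_comm, ← pow_succ]
    -- hence x N ≤ c for all N
    set c : X := x 0 + 2 • b⁺ with hc
    have hxc : ∀ N, x N ≤ c := by
      intro N
      have htel : x N - x 0 = ∑ n ∈ Finset.range N, (x (n + 1) - x n) :=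
        (Finset.sum_range_sub x N).symm
      have hle : ∑ n ∈ Finset.range N, (x (n + 1) - x n) ≤ ∑ n ∈ Finset.range N, p n :=
        Finset.sum_le_sum fun n _ => le_posPart _
      have : x N - x 0 ≤ 2 • b⁺ := by
        rw [htel]; exact hle.trans (hsum N)
      calc x N = x 0 + (x N - x 0) := by abel
        _ ≤ x 0 + 2 • b⁺ := add_le_add_right this _
    -- pass to the limit
    have htend : Tendsto (fun n => f (x n)) atTop (𝓝 z) := by
      rw [tendsto_iff_dist_tendsto_zero]
      refine squeeze_zero (g := fun n => (4 : ℝ)⁻¹ ^ n) (fun n => dist_nonneg)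
        (fun n => ?_)
        (tendsto_pow_atTop_nhds_zero_of_lt_one (by norm_num) (by norm_num))
      calc dist (f (x n)) z = dist z (f (x n)) := dist_comm _ _
        _ ≤ (4 : ℝ)⁻¹ ^ n / 2 := (hx n).le
        _ ≤ (4 : ℝ)⁻¹ ^ n := half_le_self (by positivity)
    have : z ≤ f c :=
      le_of_tendsto htend (Eventually.of_forall fun N => hf_mono _ _ (hxc N))
    exact hz c this
end
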